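/- Let X be a complex Banach space and T ∈ B(X) with σ(T) ⊆ the closed unit disk. Suppose there exist m ≥ 1 and C > 0 such that for all r > 1, x ∈ X, x* ∈ X*: ∫₀^{2π} |⟨R(re^{it},T)^{m+1}x, x*⟩| dt ≤ C/((r+1)(r−1)^m) ‖x‖ ‖x*‖. Then T is power bounded; more precisely ‖Tⁿ‖ ≤ 2^m m! C e / π for all n ∈ ℕ. -/

import Mathlib

open Complex MeasureTheory Metric
open scoped Real

set_option maxHeartbeats 1000000
set_option linter.unusedSectionVars false

namespace GFSaux

open Filter
open scoped Topology


variable {X : Type*} [NormedAddCommGroup X] [NormedSpace ℂ X] [CompleteSpace X]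

local notation "𝔸" => X →L[ℂ] X

lemma mem_res (T : 𝔸) (hσ : spectrum ℂ T ⊆ closedBall 0 1) {z : ℂ} (hz : 1 < ‖z‖) :
    z ∈ resolventSet ℂ T := by
  have h : z ∉ spectrum ℂ T := fun h =>
    absurd (mem_closedBall_zero_iff.mp (hσ h)) (not_le.mpr hz)
  simpa [spectrum, Set.mem_compl_iff] using h

lemma mul_res (T : 𝔸) {z : ℂ} (hz : z ∈ resolventSet ℂ T) :
    (algebraMap ℂ 𝔸 z - T) * resolvent T z = 1 := by
  rw [spectrum.resolvent_eq hz]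
  calc (algebraMap ℂ 𝔸 z - T) * (↑hz.unit⁻¹ : 𝔸)
      = (↑hz.unit : 𝔸) * ↑hz.unit⁻¹ := by rw [hz.unit_spec]
    _ = 1 := hz.unit.mul_inv

lemma res_mul (T : 𝔸) {z : ℂ} (hz : z ∈ resolventSet ℂ T) :
    resolvent T z * (algebraMap ℂ 𝔸 z - T) = 1 := by
  rw [spectrum.resolvent_eq hz]
  calc (↑hz.unit⁻¹ : 𝔸) * (algebraMap ℂ 𝔸 z - T)
      = (↑hz.unit⁻¹ : 𝔸) * ↑hz.unit := by rw [hz.unit_spec]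
    _ = 1 := hz.unit.inv_mul

lemma hasDerivAt_res_pow (T : 𝔸) {z : ℂ} (hz : z ∈ resolventSet ℂ T) (j : ℕ) :
    HasDerivAt (fun w => resolvent T w ^ j)
      ((-(j : ℂ)) • resolvent T z ^ (j + 1)) z := by
  induction j with
  | zero => simpa using hasDerivAt_const z (1 : 𝔸)
  | succ j ih =>
    have h1 := spectrum.hasDerivAt_resolvent hz
    have h2 := ih.fun_mul h1
    have e1 : (fun w : ℂ => resolvent T w ^ j * resolvent T w)
        = fun w : ℂ => resolvent T w ^ (j + 1) := by
      funext w; rw [← pow_succ]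
    have e2 : (-(j : ℂ)) • resolvent T z ^ (j + 1) * resolvent T z
          + resolvent T z ^ j * -resolvent T z ^ 2
        = (-((j : ℂ) + 1)) • resolvent T z ^ (j + 1 + 1) := by
      rw [smul_mul_assoc, ← pow_succ]
      have h3 : resolvent T z ^ j * -resolvent T z ^ 2 = -resolvent T z ^ (j + 2) := by
        rw [mul_neg, ← pow_add]
      rw [h3]
      have h4 : (j : ℕ) + 2 = j + 1 + 1 := by ring
      rw [h4]
      module
    rw [e1, e2] at h2
    refine h2.congr_deriv ?_
    push_cast; ring

lemma hasDerivAt_psi (T : 𝔸) (x : X) (x' : StrongDual ℂ X) {z : ℂ}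
    (hz : z ∈ resolventSet ℂ T) (j : ℕ) :
    HasDerivAt (fun w => x' ((resolvent T w ^ j) x))
      ((-(j : ℂ)) * x' ((resolvent T z ^ (j + 1)) x)) z := by
  have h := (x'.comp (ContinuousLinearMap.apply ℂ X x)).hasFDerivAt.comp_hasDerivAt z
    (hasDerivAt_res_pow T hz j)
  simpa [smul_eq_mul, Function.comp_def] using h

lemma hasDerivAt_res_apply (T : 𝔸) (y : X) (x' : StrongDual ℂ X) {z : ℂ}
    (hz : z ∈ resolventSet ℂ T) :
    HasDerivAt (fun w => x' (resolvent T w y)) (-x' ((resolvent T z ^ 2) y)) z := by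
  have h := hasDerivAt_psi T y x' hz 1
  simp only [pow_one] at h
  convert h using 1
  push_cast; ring

/-- The weak circle integral of the resolvent over any circle of radius `> 1` is `2πi`. -/
lemma circleIntegral_res (T : 𝔸) (hσ : spectrum ℂ T ⊆ closedBall 0 1)
    (y : X) (x' : StrongDual ℂ X) {r : ℝ} (hr : 1 < r) :
    (∮ z in C(0, r), x' (resolvent T z y)) = (2 * π * I) * x' y := by
  have hr0 : (0:ℝ) < r := by linarith
  set g : ℂ → ℂ := fun z => x' (resolvent T z y) - x' y * z⁻¹ with hg
  -- differentiability of g on ‖z‖ > 1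
  have hgdiff : ∀ z : ℂ, 1 < ‖z‖ → DifferentiableAt ℂ g z := by
    intro z hz
    have h1 := (hasDerivAt_res_apply T y x' (mem_res T hσ hz)).differentiableAt
    have hz0 : z ≠ 0 := by intro h; rw [h] at hz; simp at hz; linarith
    exact h1.sub ((differentiableAt_const _).mul (differentiableAt_inv hz0))
  -- pointwise formula for g
  have hgeq : ∀ z : ℂ, 1 < ‖z‖ → g z = z⁻¹ * x' (T (resolvent T z y)) := by
    intro z hz
    have hz0 : z ≠ 0 := by intro h; rw [h] at hz; simp at hz; linarith
    have hm := mul_res T (mem_res T hσ hz)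
    have hop : z • resolvent T z = 1 + T * resolvent T z := by
      have := congrArg (fun A => A + T * resolvent T z) hm
      simp only [sub_mul, Algebra.algebraMap_eq_smul_one, smul_mul_assoc, one_mul] at this ⊢
      linear_combination (norm := module) this
    have happ : z • (resolvent T z y) = y + T (resolvent T z y) := by
      have := congrArg (fun A : 𝔸 => A y) hop
      simpa [ContinuousLinearMap.smul_apply] using this
    have hx : z * x' (resolvent T z y) = x' y + x' (T (resolvent T z y)) := by
      have := congrArg x' happ
      simpa [_root_.map_smul, smul_eq_mul] using this
    rw [hg]
    field_simp
    linear_combination hx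
  -- the integral of g over any large circle is small
  have hbound : ∀ ε : ℝ, 0 < ε → ‖∮ z in C(0, r), g z‖ ≤ 2 * π * (‖x'‖ * (‖T‖ * ‖y‖)) * ε := by
    intro ε hε
    have htend := spectrum.resolvent_tendsto_cobounded (𝕜 := ℂ) T
    have h1 : ∀ᶠ z : ℂ in Bornology.cobounded ℂ, ‖resolvent T z‖ < ε := by
      have := Metric.tendsto_nhds.mp htend ε hε
      simpa [dist_eq_norm] using this
    rw [atTop_basis_Ioi.cobounded_of_norm.eventually_iff] at h1
    obtain ⟨M, -, hM⟩ := h1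
    set R : ℝ := max r (max (M + 1) 1) with hR
    have hrR : r ≤ R := le_max_left _ _
    have hR1 : 1 < R := lt_of_lt_of_le hr hrR
    have hR0 : (0:ℝ) < R := by linarith
    have hMR : M < R := by
      have : M + 1 ≤ R := le_trans (le_max_left _ _) (le_max_right _ _)
      linarith
    -- transfer to big circle
    have heq : (∮ z in C(0, r), g z) = ∮ z in C(0, R), g z := by
      refine (circleIntegral_eq_of_differentiable_on_annulus_off_countable hr0 hrR
        Set.countable_empty ?_ ?_).symm
      · intro z hz
        have h2 : 1 < ‖z‖ := by
          have := hz.2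
          simp only [mem_ball, dist_zero_right, not_lt] at this
          linarith
        exact ((hgdiff z h2).continuousAt).continuousWithinAt
      · intro z hz
        have h2 : 1 < ‖z‖ := by
          have := hz.1.2
          simp only [mem_closedBall, dist_zero_right, not_le] at this
          linarith
        exact hgdiff z h2
    rw [heq]
    have hb : ∀ z ∈ sphere (0:ℂ) R, ‖g z‖ ≤ R⁻¹ * (‖x'‖ * (‖T‖ * (ε * ‖y‖))) := by
      intro z hz
      rw [mem_sphere_zero_iff_norm] at hz
      have h2 : 1 < ‖z‖ := by rw [hz]; exact hR1
      rw [hgeq z h2]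
      have hres : ‖resolvent T z‖ ≤ ε := le_of_lt (hM (show z ∈ norm ⁻¹' Set.Ioi M by rw [Set.mem_preimage, Set.mem_Ioi, hz]; exact hMR))
      calc ‖z⁻¹ * x' (T (resolvent T z y))‖ = ‖z‖⁻¹ * ‖x' (T (resolvent T z y))‖ := by
            rw [norm_mul, norm_inv]
        _ ≤ R⁻¹ * (‖x'‖ * (‖T‖ * (ε * ‖y‖))) := by
            rw [hz]
            refine mul_le_mul_of_nonneg_left ?_ (by positivity)
            calc ‖x' (T (resolvent T z y))‖ ≤ ‖x'‖ * ‖T (resolvent T z y)‖ :=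
                  x'.le_opNorm _
              _ ≤ ‖x'‖ * (‖T‖ * ‖resolvent T z y‖) := by
                  refine mul_le_mul_of_nonneg_left (T.le_opNorm _) (norm_nonneg _)
              _ ≤ ‖x'‖ * (‖T‖ * (ε * ‖y‖)) := by
                  refine mul_le_mul_of_nonneg_left
                    (mul_le_mul_of_nonneg_left ?_ (norm_nonneg _)) (norm_nonneg _)
                  calc ‖resolvent T z y‖ ≤ ‖resolvent T z‖ * ‖y‖ :=
                        (resolvent T z).le_opNorm _
                    _ ≤ ε * ‖y‖ := mul_le_mul_of_nonneg_right hres (norm_nonneg _)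
    have := circleIntegral.norm_integral_le_of_norm_le_const (le_of_lt hR0) hb
    calc ‖∮ z in C(0, R), g z‖ ≤ 2 * π * R * (R⁻¹ * (‖x'‖ * (‖T‖ * (ε * ‖y‖)))) := this
      _ = 2 * π * (‖x'‖ * (‖T‖ * ‖y‖)) * ε := by
          field_simp
  -- hence the integral of g is 0
  have hg0 : (∮ z in C(0, r), g z) = 0 := by
    set c := ∮ z in C(0, r), g z with hc
    set K : ℝ := 2 * π * (‖x'‖ * (‖T‖ * ‖y‖)) with hK
    have hK0 : 0 ≤ K := by positivity
    rw [← norm_eq_zero]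
    by_contra h
    have hpos : 0 < ‖c‖ := lt_of_le_of_ne (norm_nonneg _) (Ne.symm h)
    rcases hK0.eq_or_lt with hK1 | hK1
    · have := hbound 1 one_pos
      rw [← hK1, zero_mul] at this
      exact absurd (lt_of_le_of_lt this hpos) (lt_irrefl _)
    · have h1 := hbound (‖c‖ / (2 * K)) (by positivity)
      have h2 : K * (‖c‖ / (2 * K)) = ‖c‖ / 2 := by field_simp
      rw [h2] at h1
      linarith
  -- integrability
  have hgint : CircleIntegrable g 0 r := by
    refine ContinuousOn.circleIntegrable (le_of_lt hr0) ?_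
    intro z hz
    rw [mem_sphere_zero_iff_norm] at hz
    exact ((hgdiff z (by rw [hz]; exact hr)).continuousAt).continuousWithinAt
  have hiint : CircleIntegrable (fun z : ℂ => x' y * z⁻¹) 0 r := by
    refine ContinuousOn.circleIntegrable (le_of_lt hr0) ?_
    intro z hz
    rw [mem_sphere_zero_iff_norm] at hz
    have hz0 : z ≠ 0 := by intro h; rw [h] at hz; simp at hz; linarith
    exact (((differentiableAt_const (𝕜 := ℂ) (x' y)).mul (differentiableAt_inv hz0)).continuousAt).continuousWithinAt
  have hfint : CircleIntegrable (fun z : ℂ => x' (resolvent T z y)) 0 r := by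
    refine ContinuousOn.circleIntegrable (le_of_lt hr0) ?_
    intro z hz
    rw [mem_sphere_zero_iff_norm] at hz
    exact ((hasDerivAt_res_apply T y x' (mem_res T hσ (by rw [hz]; exact hr))
      ).differentiableAt.continuousAt).continuousWithinAt
  -- conclude
  have hsub := circleIntegral.integral_sub hfint hiint
  rw [hg] at hg0
  rw [hg0] at hsub
  have hmain : (∮ z in C(0, r), x' (resolvent T z y)) = ∮ z in C(0, r), x' y * z⁻¹ := by
    have := sub_eq_zero.mp hsub.symm
    exact this
  rw [hmain]
  have h3 : (∮ z in C(0, r), x' y * z⁻¹) = x' y • ∮ z in C(0, r), z⁻¹ :=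
    circleIntegral.integral_smul (x' y) (fun z => z⁻¹) 0 r
  rw [h3]
  have h4 : (∮ z in C(0, r), z⁻¹) = 2 * π * I := by
    have := circleIntegral.integral_sub_center_inv (0:ℂ) (ne_of_gt hr0)
    simpa using this
  rw [h4, smul_eq_mul]
  ring


lemma psi_contOn (T : 𝔸) (hσ : spectrum ℂ T ⊆ closedBall 0 1)
    (x : X) (x' : StrongDual ℂ X) {r : ℝ} (hr : 1 < r) (q j : ℕ) :
    CircleIntegrable (fun z : ℂ => z ^ q * x' ((resolvent T z ^ j) x)) 0 r := by
  refine ContinuousOn.circleIntegrable (by linarith) ?_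
  intro z hz
  rw [mem_sphere_zero_iff_norm] at hz
  have h1 := (hasDerivAt_psi T x x' (mem_res T hσ (by rw [hz]; exact hr)) j).differentiableAt
  exact (((differentiableAt_pow q).mul h1).continuousAt).continuousWithinAt

/-- Cauchy integral representation of `Tⁿ` (weak form). -/
lemma rep (T : 𝔸) (hσ : spectrum ℂ T ⊆ closedBall 0 1)
    (x : X) (x' : StrongDual ℂ X) {r : ℝ} (hr : 1 < r) (n : ℕ) :
    (∮ z in C(0, r), z ^ n * x' (resolvent T z x)) = (2 * π * I) * x' ((T ^ n) x) := by
  have hr0 : (0:ℝ) < r := by linarith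
  set c : ℕ → ℂ := fun k => x' ((T ^ (n - 1 - k)) x) with hcdef
  -- pointwise identity
  have key : ∀ z : ℂ, 1 < ‖z‖ →
      z ^ n * x' (resolvent T z x)
        = (∑ k ∈ Finset.range n, z ^ k * c k) + x' (resolvent T z ((T ^ n) x)) := by
    intro z hz
    have hzr := mem_res T hσ hz
    have hgeom := (Algebra.commute_algebraMap_left (A := 𝔸) z T).mul_geom_sum₂ n
    have hS : (∑ i ∈ Finset.range n, algebraMap ℂ 𝔸 z ^ i * T ^ (n - 1 - i))
        = resolvent T z * (algebraMap ℂ 𝔸 z ^ n - T ^ n) := by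
      calc (∑ i ∈ Finset.range n, algebraMap ℂ 𝔸 z ^ i * T ^ (n - 1 - i))
          = (resolvent T z * (algebraMap ℂ 𝔸 z - T))
            * (∑ i ∈ Finset.range n, algebraMap ℂ 𝔸 z ^ i * T ^ (n - 1 - i)) := by
            rw [res_mul T hzr, one_mul]
        _ = resolvent T z * ((algebraMap ℂ 𝔸 z - T)
            * ∑ i ∈ Finset.range n, algebraMap ℂ 𝔸 z ^ i * T ^ (n - 1 - i)) := by
            rw [mul_assoc]
        _ = resolvent T z * (algebraMap ℂ 𝔸 z ^ n - T ^ n) := by rw [hgeom]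
    have happ := congrArg (fun A : 𝔸 => x' (A x)) hS
    simp only [ContinuousLinearMap.sum_apply, map_sum, ContinuousLinearMap.mul_apply,
      ← map_pow, Algebra.algebraMap_eq_smul_one, ContinuousLinearMap.smul_apply,
      ContinuousLinearMap.one_apply, _root_.map_smul, smul_eq_mul,
      smul_pow, one_pow, ContinuousLinearMap.sub_apply, map_sub] at happ
    rw [hcdef]
    linear_combination -happ
  -- integral congruence
  have hcongr : (∮ z in C(0, r), z ^ n * x' (resolvent T z x))
      = ∮ z in C(0, r),
          ((∑ k ∈ Finset.range n, z ^ k * c k) + x' (resolvent T z ((T ^ n) x))) := by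
    refine circleIntegral.integral_congr (le_of_lt hr0) ?_
    intro z hz
    rw [mem_sphere_zero_iff_norm] at hz
    exact key z (by rw [hz]; exact hr)
  -- the polynomial part integrates to zero
  have hpoly : (∮ z in C(0, r), (∑ k ∈ Finset.range n, z ^ k * c k)) = 0 := by
    refine circleIntegral.integral_eq_zero_of_hasDerivWithinAt (f := fun z =>
      ∑ k ∈ Finset.range n, (((k : ℂ) + 1)⁻¹ * z ^ (k + 1) * c k)) (le_of_lt hr0) ?_
    intro z hz
    refine HasDerivAt.hasDerivWithinAt ?_
    refine HasDerivAt.fun_sum ?_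
    intro k hk
    have h1 := ((hasDerivAt_pow (k + 1) z).const_mul (((k : ℂ) + 1)⁻¹)).mul_const (c k)
    refine h1.congr_deriv ?_
    have hk0 : ((k : ℂ) + 1) ≠ 0 := by norm_cast
    push_cast
    field_simp
    try ring
  -- integrability
  have hint1 : CircleIntegrable (fun z : ℂ =>
      (∑ k ∈ Finset.range n, z ^ k * c k) + x' (resolvent T z ((T ^ n) x))) 0 r := by
    refine ContinuousOn.circleIntegrable (le_of_lt hr0) ?_
    intro z hz
    rw [mem_sphere_zero_iff_norm] at hz
    have h2 := (hasDerivAt_res_apply T ((T ^ n) x) x'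
      (mem_res T hσ (by rw [hz]; exact hr))).differentiableAt
    have h3 : DifferentiableAt ℂ (fun z : ℂ => ∑ k ∈ Finset.range n, z ^ k * c k) z :=
      DifferentiableAt.fun_sum fun k _ => (differentiableAt_pow k).mul_const (c k)
    exact ((h3.add h2).continuousAt).continuousWithinAt
  have hint2 : CircleIntegrable (fun z : ℂ => ∑ k ∈ Finset.range n, z ^ k * c k) 0 r := by
    refine ContinuousOn.circleIntegrable (le_of_lt hr0) ?_
    intro z hz
    exact ((DifferentiableAt.fun_sum fun k _ =>
      (differentiableAt_pow (𝕜 := ℂ) k).mul_const (c k)).continuousAt).continuousWithinAt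
  -- combine
  have hsub := circleIntegral.integral_sub hint1 hint2
  have heq2 : (fun z : ℂ => ((∑ k ∈ Finset.range n, z ^ k * c k)
      + x' (resolvent T z ((T ^ n) x))) - (∑ k ∈ Finset.range n, z ^ k * c k))
      = fun z : ℂ => x' (resolvent T z ((T ^ n) x)) := by
    funext z; ring
  rw [heq2] at hsub
  rw [hcongr]
  have := circleIntegral_res T hσ ((T ^ n) x) x' hr
  rw [this, hpoly, sub_zero] at hsub
  rw [hsub]

/-- One integration by parts. -/
lemma ibp (T : 𝔸) (hσ : spectrum ℂ T ⊆ closedBall 0 1)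
    (x : X) (x' : StrongDual ℂ X) {r : ℝ} (hr : 1 < r) (p j : ℕ) :
    (∮ z in C(0, r), z ^ p * x' ((resolvent T z ^ j) x))
      = ((j : ℂ) / ((p : ℂ) + 1))
        * ∮ z in C(0, r), z ^ (p + 1) * x' ((resolvent T z ^ (j + 1)) x) := by
  have hr0 : (0:ℝ) < r := by linarith
  have hp0 : ((p : ℂ) + 1) ≠ 0 := by norm_cast
  -- the derivative identity
  have hD : (∮ z in C(0, r), (z ^ p * x' ((resolvent T z ^ j) x)
      - ((j : ℂ) / ((p : ℂ) + 1)) * (z ^ (p + 1) * x' ((resolvent T z ^ (j + 1)) x)))) = 0 := by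
    refine circleIntegral.integral_eq_zero_of_hasDerivWithinAt (f := fun z =>
      ((p : ℂ) + 1)⁻¹ * z ^ (p + 1) * x' ((resolvent T z ^ j) x)) (le_of_lt hr0) ?_
    intro z hz
    rw [mem_sphere_zero_iff_norm] at hz
    have hzr := mem_res T hσ (by rw [hz]; exact hr)
    have h1 := ((hasDerivAt_pow (p + 1) z).const_mul (((p : ℂ) + 1)⁻¹))
    have h2 := hasDerivAt_psi T x x' hzr j
    have h3 := h1.fun_mul h2
    refine HasDerivAt.hasDerivWithinAt ?_
    refine h3.congr_deriv ?_
    push_cast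
    field_simp
    ring
  have hint1 := psi_contOn T hσ x x' hr p j
  have hint2' := psi_contOn T hσ x x' hr (p + 1) (j + 1)
  have hint2 : CircleIntegrable (fun z : ℂ =>
      ((j : ℂ) / ((p : ℂ) + 1)) * (z ^ (p + 1) * x' ((resolvent T z ^ (j + 1)) x))) 0 r :=
    IntervalIntegrable.const_mul hint2' _
  have hsub := circleIntegral.integral_sub hint1 hint2
  rw [hD] at hsub
  have h4 : (∮ z in C(0, r),
      ((j : ℂ) / ((p : ℂ) + 1)) * (z ^ (p + 1) * x' ((resolvent T z ^ (j + 1)) x)))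
      = ((j : ℂ) / ((p : ℂ) + 1))
        * ∮ z in C(0, r), z ^ (p + 1) * x' ((resolvent T z ^ (j + 1)) x) := by
    simpa [smul_eq_mul] using circleIntegral.integral_smul ((j : ℂ) / ((p : ℂ) + 1))
      (fun z => z ^ (p + 1) * x' ((resolvent T z ^ (j + 1)) x)) 0 r
  rw [h4] at hsub
  linear_combination -hsub
  

lemma chain (T : 𝔸) (hσ : spectrum ℂ T ⊆ closedBall 0 1)
    (x : X) (x' : StrongDual ℂ X) {r : ℝ} (hr : 1 < r) (n : ℕ) (m : ℕ) :
    (∮ z in C(0, r), z ^ n * x' (resolvent T z x))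
      = (∏ i ∈ Finset.range m, (((i : ℂ) + 1) / ((n : ℂ) + (i : ℂ) + 1)))
        * ∮ z in C(0, r), z ^ (n + m) * x' ((resolvent T z ^ (m + 1)) x) := by
  induction m with
  | zero => simp [pow_one]
  | succ m ih =>
    rw [ih, ibp T hσ x x' hr (n + m) (m + 1)]
    rw [Finset.prod_range_succ]
    have e1 : n + (m + 1) = n + m + 1 := by ring
    rw [e1]
    have e2 : ((n : ℂ) + (m : ℂ)) + 1 = ((n + m : ℕ) : ℂ) + 1 := by push_cast; ring
    have e3 : (((m + 1 : ℕ)) : ℂ) = (m : ℂ) + 1 := by push_cast; ring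
    rw [mul_assoc]
    congr 1
    rw [e3, e2]

lemma Sbound (T : 𝔸) (x : X) (x' : StrongDual ℂ X) {r : ℝ} (hr : 1 < r)
    (q j : ℕ) (B : ℝ)
    (hB : ∫ t in (0:ℝ)..(2 * π),
        ‖x' ((resolvent T (circleMap 0 r t) ^ j) x)‖ ≤ B) :
    ‖∮ z in C(0, r), z ^ q * x' ((resolvent T z ^ j) x)‖ ≤ r ^ (q + 1) * B := by
  have hr0 : (0:ℝ) < r := by linarith
  have h2π : (0:ℝ) ≤ 2 * π := by positivity
  rw [circleIntegral]
  refine le_trans (intervalIntegral.norm_integral_le_integral_norm h2π) ?_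
  have hpt : ∀ t : ℝ, ‖deriv (circleMap 0 r) t •
      (circleMap 0 r t ^ q * x' ((resolvent T (circleMap 0 r t) ^ j) x))‖
      = r ^ (q + 1) * ‖x' ((resolvent T (circleMap 0 r t) ^ j) x)‖ := by
    intro t
    rw [deriv_circleMap]
    rw [smul_eq_mul]
    rw [norm_mul, norm_mul, norm_mul, norm_pow]
    have h1 : ‖circleMap 0 r t‖ = r := by
      simpa [abs_of_pos hr0] using abs_circleMap_zero r t
    rw [h1, Complex.norm_I, mul_one]
    ring
  calc (∫ t in (0:ℝ)..(2 * π), ‖deriv (circleMap 0 r) t •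
        (circleMap 0 r t ^ q * x' ((resolvent T (circleMap 0 r t) ^ j) x))‖)
      = ∫ t in (0:ℝ)..(2 * π),
          r ^ (q + 1) * ‖x' ((resolvent T (circleMap 0 r t) ^ j) x)‖ := by
        refine intervalIntegral.integral_congr ?_
        intro t _
        exact hpt t
    _ = r ^ (q + 1) * ∫ t in (0:ℝ)..(2 * π),
          ‖x' ((resolvent T (circleMap 0 r t) ^ j) x)‖ :=
        intervalIntegral.integral_const_mul _ _
    _ ≤ r ^ (q + 1) * B := by
        refine mul_le_mul_of_nonneg_left hB (by positivity)


end GFSaux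

open GFSaux in
/-- The discrete Gomilko–Shi–Feng condition `(GFS)_m` implies power boundedness,
with `‖Tⁿ‖ ≤ 2^m m! C e / π`. -/
theorem stmt2 {X : Type*} [NormedAddCommGroup X] [NormedSpace ℂ X] [CompleteSpace X]
    (T : X →L[ℂ] X) (hσ : spectrum ℂ T ⊆ closedBall 0 1)
    (m : ℕ) (hm : 1 ≤ m) (C : ℝ) (hC : 0 < C)
    (hGFS : ∀ r : ℝ, 1 < r → ∀ (x : X) (x' : StrongDual ℂ X),
      ∫ t in (0:ℝ)..(2*π), ‖x' ((resolvent T ((r : ℂ) * exp (t * I)) ^ (m+1)) x)‖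
        ≤ C / ((r+1)*(r-1)^m) * ‖x‖ * ‖x'‖) :
    ∀ n : ℕ, 1 ≤ n → ‖T ^ n‖ ≤ 2^m * m.factorial * C * Real.exp 1 / π := by
  intro n hn
  have hpi : (0:ℝ) < π := Real.pi_pos
  set N : ℝ := (n : ℝ) with hN
  have hN1 : (1:ℝ) ≤ N := by rw [hN]; exact_mod_cast hn
  have hN0 : (0:ℝ) < N := by linarith
  set r : ℝ := 1 + 1/N with hrdef
  have hNinv : 0 < 1/N := by positivity
  have hr : 1 < r := by rw [hrdef]; linarith
  have hr0 : (0:ℝ) < r := by linarith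
  have hF0 : (0:ℝ) < (m.factorial : ℝ) := by exact_mod_cast m.factorial_pos
  refine ContinuousLinearMap.opNorm_le_bound _ (by positivity) ?_
  intro x
  refine NormedSpace.norm_le_dual_bound ℂ _ (by positivity) ?_
  intro x'
  set a : ℝ := ‖x‖ * ‖x'‖ with ha
  have ha0 : 0 ≤ a := by positivity
  -- key identity
  have hkey := (rep T hσ x x' hr n).symm.trans (chain T hσ x x' hr n m)
  set P : ℂ := ∏ i ∈ Finset.range m, (((i : ℂ) + 1) / ((n : ℂ) + (i : ℂ) + 1)) with hP
  set S : ℂ := ∮ z in C(0, r), z ^ (n + m) * x' ((resolvent T z ^ (m + 1)) x) with hS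
  -- GFS bound transported to circleMap
  set Bc : ℝ := C / ((r + 1) * (r - 1) ^ m) with hBc
  have hGFS' : ∫ t in (0:ℝ)..(2 * π),
      ‖x' ((resolvent T (circleMap 0 r t) ^ (m + 1)) x)‖ ≤ Bc * ‖x‖ * ‖x'‖ := by
    have h := hGFS r hr x x'
    have heq : (∫ t in (0:ℝ)..(2 * π),
        ‖x' ((resolvent T (circleMap 0 r t) ^ (m + 1)) x)‖)
        = ∫ t in (0:ℝ)..(2 * π),
        ‖x' ((resolvent T ((r : ℂ) * exp (t * I)) ^ (m + 1)) x)‖ := by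
      refine intervalIntegral.integral_congr ?_
      intro t _
      simp [circleMap]
    rw [heq, hBc]
    exact h
  have hSb : ‖S‖ ≤ r ^ (n + m + 1) * (Bc * ‖x‖ * ‖x'‖) :=
    Sbound T x x' hr (n + m) (m + 1) _ hGFS'
  -- norm of P
  set Q : ℝ := ∏ i ∈ Finset.range m, (N + i + 1) with hQ
  have hQ0 : 0 < Q := Finset.prod_pos fun i _ => by positivity
  have hPn : ‖P‖ = (m.factorial : ℝ) / Q := by
    rw [hP, norm_prod]
    have h1 : ∀ i ∈ Finset.range m,
        ‖((i : ℂ) + 1) / ((n : ℂ) + (i : ℂ) + 1)‖ = ((i : ℝ) + 1) / (N + i + 1) := by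
      intro i _
      rw [norm_div]
      congr 1
      · have h2 : ((i : ℂ) + 1) = (((i + 1 : ℕ)) : ℂ) := by push_cast; ring
        rw [h2, Complex.norm_natCast]; push_cast; ring
      · have h2 : ((n : ℂ) + (i : ℂ) + 1) = (((n + i + 1 : ℕ)) : ℂ) := by push_cast; ring
        rw [h2, Complex.norm_natCast, hN]; push_cast; ring
    rw [Finset.prod_congr rfl h1, Finset.prod_div_distrib]
    congr 1
    · have := Finset.prod_range_add_one_eq_factorial m
      have h3 : ((∏ x ∈ Finset.range m, (x + 1) : ℕ) : ℝ)
          = ∏ i ∈ Finset.range m, ((i : ℝ) + 1) := by push_cast; ring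
      rw [← h3, this]
  -- N^m ≤ Q
  have hQn : N ^ m ≤ Q := by
    have h1 : ∏ _i ∈ Finset.range m, N ≤ Q := by
      refine Finset.prod_le_prod (fun i _ => le_of_lt hN0) (fun i _ => ?_)
      have h2 : (0:ℝ) ≤ (i:ℝ) := Nat.cast_nonneg i
      linarith
    rwa [Finset.prod_const, Finset.card_range] at h1
  -- bound on Bc
  have hBcb : Bc ≤ C * N ^ m / 2 := by
    have hrm : (r - 1) = 1/N := by rw [hrdef]; ring
    have h1 : (2:ℝ) * (1/N) ^ m ≤ (r + 1) * (r - 1) ^ m := by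
      rw [hrm]
      have : (2:ℝ) ≤ r + 1 := by rw [hrdef]; linarith
      refine mul_le_mul_of_nonneg_right this (by positivity)
    have h2 : (0:ℝ) < 2 * (1/N) ^ m := by positivity
    calc Bc ≤ C / (2 * (1/N) ^ m) := by
          rw [hBc]
          exact div_le_div_of_nonneg_left (le_of_lt hC) h2 h1
      _ = C * N ^ m / 2 := by
          rw [one_div, inv_pow]
          field_simp
  have hBc0 : 0 ≤ Bc := by
    rw [hBc]
    have hrm : (r - 1) = 1/N := by rw [hrdef]; ring
    have : (0:ℝ) < (r + 1) * (r - 1) ^ m := by rw [hrm]; positivity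
    positivity
  -- bound on r^(n+m+1)
  have hrpow : r ^ (n + m + 1) ≤ Real.exp 1 * 2 ^ (m + 1) := by
    have h1 : r ^ n ≤ Real.exp 1 := by
      have h2 : r ≤ Real.exp (1/N) := by
        have := Real.add_one_le_exp (1/N)
        rw [hrdef]; linarith
      calc r ^ n ≤ Real.exp (1/N) ^ n := pow_le_pow_left₀ (le_of_lt hr0) h2 n
        _ = Real.exp ((n : ℝ) * (1/N)) := by rw [← Real.exp_nat_mul]
        _ = Real.exp 1 := by
            congr 1
            rw [← hN]
            field_simp
    have h3 : r ^ (m + 1) ≤ 2 ^ (m + 1) := by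
      refine pow_le_pow_left₀ (le_of_lt hr0) ?_ _
      rw [hrdef]
      have : 1/N ≤ 1 := by
        rw [div_le_one hN0]; exact hN1
      linarith
    calc r ^ (n + m + 1) = r ^ n * r ^ (m + 1) := by rw [← pow_add]; ring_nf
      _ ≤ Real.exp 1 * 2 ^ (m + 1) := by
          refine mul_le_mul h1 h3 (by positivity) (le_of_lt (Real.exp_pos 1))
  -- combine
  have hnorm : 2 * π * ‖x' ((T ^ n) x)‖ = ‖P‖ * ‖S‖ := by
    have h0 := congrArg norm hkey
    have h2 : ‖2 * (π : ℂ) * I * x' ((T ^ n) x)‖ = 2 * π * ‖x' ((T ^ n) x)‖ := by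
      simp only [norm_mul, Complex.norm_I, mul_one, Complex.norm_real,
        Complex.norm_ofNat, Real.norm_eq_abs, _root_.abs_of_nonneg Real.pi_pos.le]
    rw [h2, norm_mul] at h0
    exact h0
  have hfinal : 2 * π * ‖x' ((T ^ n) x)‖ ≤ Real.exp 1 * 2 ^ m * (m.factorial : ℝ) * C * a := by
    rw [hnorm, hPn]
    calc (m.factorial : ℝ) / Q * ‖S‖
        ≤ (m.factorial : ℝ) / Q * (r ^ (n + m + 1) * (Bc * ‖x‖ * ‖x'‖)) := by
          refine mul_le_mul_of_nonneg_left hSb (by positivity)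
      _ ≤ (m.factorial : ℝ) / Q * ((Real.exp 1 * 2 ^ (m + 1)) * ((C * N ^ m / 2) * ‖x‖ * ‖x'‖)) := by
          refine mul_le_mul_of_nonneg_left ?_ (by positivity)
          refine mul_le_mul hrpow ?_ (by positivity) (by positivity)
          refine mul_le_mul_of_nonneg_right (mul_le_mul_of_nonneg_right hBcb (norm_nonneg _)) (norm_nonneg _)
      _ = Real.exp 1 * 2 ^ m * (m.factorial : ℝ) * C * a * (N ^ m / Q) := by
          rw [ha]
          field_simp
          ring
      _ ≤ Real.exp 1 * 2 ^ m * (m.factorial : ℝ) * C * a * 1 := by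
          refine mul_le_mul_of_nonneg_left ?_ (by positivity)
          rw [div_le_one hQ0]
          exact hQn
      _ = Real.exp 1 * 2 ^ m * (m.factorial : ℝ) * C * a := by ring
  -- finish
  have hgoal : ‖x' ((T ^ n) x)‖ ≤ (2 ^ m * (m.factorial : ℝ) * C * Real.exp 1 / π * ‖x‖) * ‖x'‖ := by
    rw [ha] at hfinal
    have h1 : ‖x' ((T ^ n) x)‖ ≤ Real.exp 1 * 2 ^ m * (m.factorial : ℝ) * C * (‖x‖ * ‖x'‖) / (2 * π) := by
      rw [le_div_iff₀ (by positivity)]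
      linarith
    refine le_trans h1 ?_
    rw [div_le_iff₀ (by positivity)]
    have h2 : (0:ℝ) ≤ Real.exp 1 * 2 ^ m * (m.factorial : ℝ) * C * (‖x‖ * ‖x'‖) := by positivity
    have h3 : (2 ^ m * (m.factorial : ℝ) * C * Real.exp 1 / π * ‖x‖) * ‖x'‖ * (2 * π)
        = 2 * (Real.exp 1 * 2 ^ m * (m.factorial : ℝ) * C * (‖x‖ * ‖x'‖)) := by
      field_simp
    rw [h3]
    linarith
  exact hgoal
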